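/- Let t ≥ 2 and let m₀, m₁, …, m_{t−2} be positive integers with m = m₀+m₁+⋯+m_{t−2}. Then Γ(m, t) ≥ Π_{i=0}^{t−3} binom(m_i + m_{i+1} − 1, m_i − 1). -/

import Mathlib

/-- A list `γ` of natural numbers is a *permitted sequence* of parameters
(`γ.length`, `t`) if its first entry is `0`, each entry exceeds the previous one by at
most `1`, and every entry is at most `t - 2`. -/
def PermittedSeq (t : ℕ) (γ : List ℕ) : Prop :=
  γ.head? = some 0 ∧ List.Chain' (fun a b => b ≤ a + 1) γ ∧ ∀ x ∈ γ, x ≤ t - 2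

/-- `Γ(m, t)`: the number of permitted sequences of parameters `(m, t)`. -/
noncomputable def permittedCount (m t : ℕ) : ℕ :=
  {γ : List ℕ | γ.length = m ∧ PermittedSeq t γ}.ncard

namespace PermittedAux

open List

/-- Insert, after each occurrence of `u` in the list, a block of copies of `u+1`;
the sizes of successive blocks are taken from `cs`. -/
def ins (u : ℕ) : List ℕ → List ℕ → List ℕ
  | [], _ => []
  | a :: g, cs =>
      if a = u then a :: (List.replicate cs.headI (u + 1) ++ ins u g cs.tail)
      else a :: ins u g cs

theorem head?_ins (u : ℕ) (γ cs : List ℕ) : (ins u γ cs).head? = γ.head? := by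
  cases γ with
  | nil => rfl
  | cons a g => simp only [ins]; split <;> rfl

theorem chain'_ins (u : ℕ) (γ cs : List ℕ)
    (h : List.Chain' (fun a b => b ≤ a + 1) γ) :
    List.Chain' (fun a b => b ≤ a + 1) (ins u γ cs) := by
  induction γ generalizing cs with
  | nil => simp [ins]; exact List.isChain_nil
  | cons a g IH =>
    rw [List.Chain', List.isChain_cons] at h
    obtain ⟨h1, h2⟩ := h
    simp only [ins]
    split
    · next hau =>
      subst hau
      rw [List.Chain', List.isChain_cons]
      constructor
      · intro b hb
        cases hc : cs.headI with
        | zero =>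
          simp only [hc, List.replicate_zero, List.nil_append, head?_ins] at hb
          exact h1 b hb
        | succ c =>
          simp only [hc, List.replicate_succ, List.cons_append, List.head?_cons,
            Option.mem_some_iff] at hb
          omega
      · refine List.IsChain.append (List.isChain_replicate_of_rel _ (by omega)) (IH cs.tail h2) ?_
        intro x hx y hy
        have hxv : x = a + 1 := List.eq_of_mem_replicate (List.mem_of_mem_getLast? hx)
        rw [head?_ins] at hy
        have := h1 y hy
        omega
    · rw [List.Chain', List.isChain_cons]
      refine ⟨fun b hb => ?_, IH cs h2⟩
      rw [head?_ins] at hb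
      exact h1 b hb

theorem count_ins_ne (u x : ℕ) (hx : x ≠ u + 1) (γ cs : List ℕ) :
    (ins u γ cs).count x = γ.count x := by
  induction γ generalizing cs with
  | nil => simp [ins]
  | cons a g IH =>
    simp only [ins]
    split
    · simp [List.count_cons, List.count_append, List.count_replicate, hx, Ne.symm hx, IH]
    · simp [List.count_cons, IH]

theorem count_ins_self (u : ℕ) (γ cs : List ℕ) (hne : (u + 1) ∉ γ)
    (hlen : cs.length = γ.count u) :
    (ins u γ cs).count (u + 1) = cs.sum := by
  induction γ generalizing cs with
  | nil =>
    simp only [List.count_nil] at hlen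
    rw [List.length_eq_zero_iff] at hlen
    subst hlen
    simp [ins]
  | cons a g IH =>
    have hne1 : u + 1 ≠ a := fun h => hne (h ▸ List.mem_cons_self)
    have hneg : (u + 1) ∉ g := fun h => hne (List.mem_cons_of_mem _ h)
    simp only [ins]
    split
    · next hau =>
      subst hau
      rw [List.count_cons_self] at hlen
      cases cs with
      | nil => simp at hlen
      | cons c cst =>
        simp only [List.length_cons] at hlen
        rw [List.count_cons_of_ne (Ne.symm hne1)]
        simp only [List.headI_cons, List.tail_cons, List.count_append,
          List.count_replicate, if_pos rfl, List.sum_cons]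
        rw [IH cst hneg (by omega)]
        simp
    · next hau =>
      rw [List.count_cons_of_ne (Ne.symm hne1)]
      rw [List.count_cons_of_ne hau] at hlen
      exact IH cs hneg hlen

theorem replicate_append_inj {x : ℕ} : ∀ (c c' : ℕ) (L L' : List ℕ),
    L.head? ≠ some x → L'.head? ≠ some x →
    List.replicate c x ++ L = List.replicate c' x ++ L' → c = c' ∧ L = L' := by
  intro c
  induction c with
  | zero =>
    intro c' L L' hL hL' h
    cases c' with
    | zero => simpa using h
    | succ c' =>
      exfalso
      simp only [List.replicate_zero, List.nil_append, List.replicate_succ,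
        List.cons_append] at h
      exact hL (h ▸ rfl)
  | succ c IH =>
    intro c' L L' hL hL' h
    cases c' with
    | zero =>
      exfalso
      simp only [List.replicate_zero, List.nil_append, List.replicate_succ,
        List.cons_append] at h
      exact hL' (h ▸ rfl)
    | succ c' =>
      simp only [List.replicate_succ, List.cons_append, List.cons.injEq, true_and] at h
      obtain ⟨h1, h2⟩ := IH c' L L' hL hL' h
      exact ⟨by omega, h2⟩

theorem ins_inj (u : ℕ) : ∀ (γ γ' cs cs' : List ℕ),
    (u + 1) ∉ γ → (u + 1) ∉ γ' →
    cs.length = γ.count u → cs'.length = γ'.count u →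
    ins u γ cs = ins u γ' cs' → γ = γ' ∧ cs = cs' := by
  intro γ
  induction γ with
  | nil =>
    intro γ' cs cs' _ _ hlen hlen' h
    cases γ' with
    | nil =>
      simp only [List.count_nil] at hlen hlen'
      rw [List.length_eq_zero_iff] at hlen hlen'
      exact ⟨rfl, hlen.trans hlen'.symm⟩
    | cons a' g' =>
      exfalso
      have : (ins u (a' :: g') cs').head? = some a' := by rw [head?_ins]; rfl
      rw [← h] at this
      simp [ins] at this
  | cons a g IH =>
    intro γ' cs cs' hne hne' hlen hlen' h
    cases γ' with
    | nil =>
      exfalso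
      have : (ins u (a :: g) cs).head? = some a := by rw [head?_ins]; rfl
      rw [h] at this
      simp [ins] at this
    | cons a' g' =>
      have haa : a = a' := by
        have h1 : (ins u (a :: g) cs).head? = some a := by rw [head?_ins]; rfl
        have h2 : (ins u (a' :: g') cs').head? = some a' := by rw [head?_ins]; rfl
        rw [h, h2] at h1
        exact (Option.some_injective _ h1).symm
      subst haa
      have hne1 : u + 1 ≠ a := fun hh => hne (hh ▸ List.mem_cons_self)
      have hneg : (u + 1) ∉ g := fun hh => hne (List.mem_cons_of_mem _ hh)
      have hneg' : (u + 1) ∉ g' := fun hh => hne' (List.mem_cons_of_mem _ hh)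
      by_cases hau : a = u
      · subst hau
        rw [List.count_cons_self] at hlen hlen'
        cases cs with
        | nil => simp at hlen
        | cons c cst =>
        cases cs' with
        | nil => simp at hlen'
        | cons c' cst' =>
        simp only [List.length_cons] at hlen hlen'
        simp only [ins, eq_self_iff_true, if_true, List.headI_cons, List.tail_cons,
          List.cons.injEq, true_and] at h
        have hgne : (ins a g cst).head? ≠ some (a + 1) := by
          rw [head?_ins]; intro hc; exact hneg (List.mem_of_mem_head? hc)
        have hgne' : (ins a g' cst').head? ≠ some (a + 1) := by
          rw [head?_ins]; intro hc; exact hneg' (List.mem_of_mem_head? hc)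
        obtain ⟨hh, ht⟩ := replicate_append_inj c c' _ _ hgne hgne' h
        obtain ⟨hg, hcs⟩ := IH g' cst cst' hneg hneg' (by omega) (by omega) ht
        refine ⟨?_, ?_⟩
        · rw [hg]
        · rw [hh, hcs]
      · simp only [ins, if_neg hau, List.cons.injEq, true_and] at h
        rw [List.count_cons_of_ne hau] at hlen hlen'
        obtain ⟨hg, hcs⟩ := IH g' cs cs' hneg hneg' hlen hlen' h
        refine ⟨?_, hcs⟩
        rw [hg]

/-- Permitted sequences with prescribed multiplicities: value `i` appears `m i` times for
`i ≤ k`, and values above `k` do not appear. -/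
def Sset (k : ℕ) (m : ℕ → ℕ) : Set (List ℕ) :=
  {γ | γ.head? = some 0 ∧ List.Chain' (fun a b => b ≤ a + 1) γ ∧
    ∀ i, γ.count i = if i ≤ k then m i else 0}

theorem finite_bdd (b : ℕ) : ∀ n : ℕ, {l : List ℕ | l.length ≤ n ∧ ∀ x ∈ l, x ≤ b}.Finite := by
  intro n
  induction n with
  | zero =>
    apply Set.Finite.subset (Set.finite_singleton ([] : List ℕ))
    rintro l ⟨h1, _⟩
    simp only [Nat.le_zero, List.length_eq_zero_iff] at h1
    simp [h1]
  | succ n IH =>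
    apply Set.Finite.subset ((Set.Finite.image2 List.cons (Set.finite_Iic b) IH).insert [])
    rintro l ⟨h1, h2⟩
    cases l with
    | nil => exact Set.mem_insert _ _
    | cons a g =>
      refine Set.mem_insert_of_mem _ (Set.mem_image2_of_mem ?_ ⟨?_, ?_⟩)
      · exact h2 a (List.mem_cons_self)
      · simpa using h1
      · exact fun x hx => h2 x (List.mem_cons_of_mem _ hx)

theorem mem_le_of_Sset {k : ℕ} {m : ℕ → ℕ} {γ : List ℕ} (hγ : γ ∈ Sset k m) :
    ∀ x ∈ γ, x ≤ k := by
  intro x hx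
  by_contra hc
  have h := hγ.2.2 x
  rw [if_neg hc, List.count_eq_zero] at h
  exact h hx

theorem length_of_Sset {k : ℕ} {m : ℕ → ℕ} {γ : List ℕ} (hγ : γ ∈ Sset k m) :
    γ.length = ∑ i ∈ Finset.range (k + 1), m i := by
  have hmem : ∀ a ∈ (γ : Multiset ℕ), a ∈ Finset.range (k + 1) := by
    intro a ha
    simp only [Multiset.mem_coe] at ha
    exact Finset.mem_range.mpr (Nat.lt_succ_of_le (mem_le_of_Sset hγ a ha))
  have := Multiset.sum_count_eq_card hmem
  simp only [Multiset.coe_count, Multiset.coe_card] at this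
  rw [← this]
  apply Finset.sum_congr rfl
  intro i hi
  rw [hγ.2.2 i, if_pos (Nat.lt_succ_iff.mp (Finset.mem_range.mp hi))]

theorem finite_Sset (k : ℕ) (m : ℕ → ℕ) : (Sset k m).Finite := by
  apply Set.Finite.subset (finite_bdd k (∑ i ∈ Finset.range (k + 1), m i))
  intro γ hγ
  exact ⟨(length_of_Sset hγ).le, mem_le_of_Sset hγ⟩

/-- The composition Finset: lists of naturals of length `n` with sum `s`. -/
noncomputable def comps (n s : ℕ) : Finset (List ℕ) :=
  Finset.image (fun σ : Sym (Fin n) s => List.ofFn fun j => Multiset.count j σ.1)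
    Finset.univ

theorem card_comps (n s : ℕ) : (comps n s).card = Nat.multichoose n s := by
  rw [comps, Finset.card_image_of_injective _ ?_, Finset.card_univ,
    Sym.card_sym_fin_eq_multichoose]
  intro σ σ' h
  rw [List.ofFn_inj] at h
  apply Sym.coe_injective
  ext j
  exact congrFun h j

theorem mem_comps {n s : ℕ} {cs : List ℕ} (h : cs ∈ comps n s) :
    cs.length = n ∧ cs.sum = s := by
  simp only [comps, Finset.mem_image, Finset.mem_univ, true_and] at h
  obtain ⟨σ, rfl⟩ := h
  constructor
  · simp
  · rw [List.sum_ofFn]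
    have hmem : ∀ a ∈ σ.1, a ∈ (Finset.univ : Finset (Fin n)) := fun a _ => Finset.mem_univ a
    have := Multiset.sum_count_eq_card hmem
    rw [this, σ.2]

theorem main_ineq (m : ℕ → ℕ) : ∀ k : ℕ, (∀ i, i ≤ k → 0 < m i) →
    ∏ i ∈ Finset.range k, Nat.multichoose (m i) (m (i + 1)) ≤ (Sset k m).ncard := by
  intro k
  induction k with
  | zero =>
    intro hm
    simp only [Finset.range_zero, Finset.prod_empty]
    have hne : (Sset 0 m).Nonempty := by
      obtain ⟨n, hn⟩ : ∃ n, m 0 = n + 1 := ⟨m 0 - 1, by have := hm 0 le_rfl; omega⟩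
      refine ⟨List.replicate (m 0) 0, ?_, ?_, ?_⟩
      · rw [hn]; simp [List.replicate_succ]
      · exact List.isChain_replicate_of_rel _ (by omega)
      · intro i
        rcases Nat.eq_zero_or_pos i with hi | hi
        · subst hi; simp [List.count_replicate]
        · rw [List.count_replicate]
          simp only [beq_iff_eq]
          split <;> split <;> omega
    exact (Set.ncard_pos (finite_Sset 0 m)).mpr hne
  | succ k IH =>
    intro hm
    have IH' := IH (fun i hi => hm i (by omega))
    set A := (finite_Sset k m).toFinset with hA
    set D := comps (m k) (m (k + 1)) with hD
    have hstep : (A ×ˢ D).card ≤ ((finite_Sset (k + 1) m).toFinset).card := by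
      apply Finset.card_le_card_of_injOn (fun p => ins k p.1 p.2)
      · rintro ⟨γ, cs⟩ hp
        rw [Finset.mem_coe, Finset.mem_product] at hp
        obtain ⟨hγA, hcsD⟩ := hp
        rw [hA, Set.Finite.mem_toFinset] at hγA
        obtain ⟨hlen, hsum⟩ := mem_comps hcsD
        rw [Finset.mem_coe, Set.Finite.mem_toFinset]
        have hk1 : (k + 1) ∉ γ := by
          have hh := hγA.2.2 (k + 1)
          rw [if_neg (by omega), List.count_eq_zero] at hh
          exact hh
        refine ⟨?_, ?_, ?_⟩
        · rw [head?_ins]; exact hγA.1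
        · exact chain'_ins _ _ _ hγA.2.1
        · intro i
          by_cases hik : i = k + 1
          · subst hik
            rw [count_ins_self k γ cs hk1 (by rw [hlen, hγA.2.2 k, if_pos le_rfl]),
              hsum, if_pos le_rfl]
          · rw [count_ins_ne k i hik, hγA.2.2 i]
            rcases le_or_gt i k with h | h
            · rw [if_pos h, if_pos (by omega)]
            · rw [if_neg (by omega), if_neg (by omega)]
      · rintro ⟨γ, cs⟩ hp ⟨γ', cs'⟩ hp' heq
        simp only [Finset.coe_product, Set.mem_prod] at hp hp'
        obtain ⟨hγA, hcsD⟩ := hp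
        obtain ⟨hγA', hcsD'⟩ := hp'
        rw [hA, Finset.mem_coe, Set.Finite.mem_toFinset] at hγA hγA'
        rw [Finset.mem_coe] at hcsD hcsD'
        have hk1 : (k + 1) ∉ γ := by
          have hh := hγA.2.2 (k + 1)
          rw [if_neg (by omega), List.count_eq_zero] at hh; exact hh
        have hk1' : (k + 1) ∉ γ' := by
          have hh := hγA'.2.2 (k + 1)
          rw [if_neg (by omega), List.count_eq_zero] at hh; exact hh
        obtain ⟨h1, h2⟩ := ins_inj k γ γ' cs cs' hk1 hk1'
          (by rw [(mem_comps hcsD).1, hγA.2.2 k, if_pos le_rfl])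
          (by rw [(mem_comps hcsD').1, hγA'.2.2 k, if_pos le_rfl]) heq
        simp [h1, h2]
    calc ∏ i ∈ Finset.range (k + 1), Nat.multichoose (m i) (m (i + 1))
        = (∏ i ∈ Finset.range k, Nat.multichoose (m i) (m (i + 1))) *
            Nat.multichoose (m k) (m (k + 1)) := Finset.prod_range_succ _ _
      _ ≤ (Sset k m).ncard * Nat.multichoose (m k) (m (k + 1)) :=
          Nat.mul_le_mul_right _ IH'
      _ = A.card * D.card := by
          rw [hA, hD, card_comps, Set.ncard_eq_toFinset_card _ (finite_Sset k m)]
      _ = (A ×ˢ D).card := (Finset.card_product _ _).symm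
      _ ≤ ((finite_Sset (k + 1) m).toFinset).card := hstep
      _ = (Sset (k + 1) m).ncard :=
          (Set.ncard_eq_toFinset_card _ (finite_Sset (k + 1) m)).symm

end PermittedAux

/-- For `t ≥ 2` and positive multiplicities `m 0, …, m (t-2)` summing to `m`,
`Γ(m, t) ≥ ∏_{i=0}^{t-3} C(m i + m (i+1) - 1, m i - 1)`. -/
theorem permittedCount_ge_prod (t : ℕ) (ht : 2 ≤ t)
    (m : ℕ → ℕ) (hm : ∀ i, i + 2 ≤ t → 0 < m i) :
    ∏ i ∈ Finset.range (t - 2), Nat.choose (m i + m (i + 1) - 1) (m i - 1)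
      ≤ permittedCount (∑ i ∈ Finset.range (t - 1), m i) t := by
  open PermittedAux in
  set k := t - 2 with hk
  have hm' : ∀ i, i ≤ k → 0 < m i := fun i hi => hm i (by omega)
  have hprod : ∏ i ∈ Finset.range (t - 2), Nat.choose (m i + m (i + 1) - 1) (m i - 1)
      = ∏ i ∈ Finset.range k, Nat.multichoose (m i) (m (i + 1)) := by
    apply Finset.prod_congr rfl
    intro i hi
    have hmi : 0 < m i := hm' i (Nat.lt_succ_iff.mp (by
      have := Finset.mem_range.mp hi; omega))
    rw [Nat.multichoose_eq]
    have h1 : m i - 1 = (m i + m (i + 1) - 1) - m (i + 1) := by omega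
    rw [h1, Nat.choose_symm (by omega)]
  rw [hprod]
  refine le_trans (main_ineq m k hm') ?_
  rw [permittedCount]
  apply Set.ncard_le_ncard
  · intro γ hγ
    refine ⟨?_, hγ.1, hγ.2.1, ?_⟩
    · rw [length_of_Sset hγ]
      have hkt : k + 1 = t - 1 := by omega
      rw [hkt]
    · exact fun x hx => le_trans (mem_le_of_Sset hγ x hx) (by omega)
  · apply Set.Finite.subset (finite_bdd (t - 2) (∑ i ∈ Finset.range (t - 1), m i))
    rintro γ ⟨h1, _, _, h3⟩
    exact ⟨h1.le, h3⟩
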